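/- Let 0 < p ≤ 1. Let G = (V,E) be a finite simple graph with |V| = n, let S ⊆ V be an independent set with |S| = k, let H be a real inner product space, and let x* : V → H be an optimal feasible C-SDP solution for G. Let E'' be a set of pairs (u,v) with u ∈ S, v ∈ V∖S such that {u,v} ∈ E for every (u,v) ∈ E''. Suppose B₁, B₂ ≥ 0 satisfy | 2·p·k(n−k) − 2·|E''| | ≤ B₁ and | ∑_{(u,v) ∈ E''} ‖x*_u − x*_v‖² − p·∑_{(u,v) ∈ S × (V∖S)} ‖x*_u − x*_v‖² | ≤ B₂. Then ∑_{(u,v) ∈ S × S} ‖x*_u − x*_v‖² ≤ 2·(B₁ + B₂)/p. -/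

import Mathlib

open Finset

/-- A feasible solution to the crude SDP: unit vectors, pairwise nonnegative inner
products, and orthogonal vectors on edges. -/
def Feasible {V : Type*} {H : Type*} [NormedAddCommGroup H] [InnerProductSpace ℝ H]
    (G : SimpleGraph V) (x : V → H) : Prop :=
  (∀ v, ‖x v‖ = 1) ∧ (∀ u v : V, (0 : ℝ) ≤ inner ℝ (x u) (x v)) ∧
    (∀ u v : V, G.Adj u v → (inner ℝ (x u) (x v) : ℝ) = 0)

/-- The crude SDP objective: the sum of squared distances over all ordered pairs. -/
noncomputable def obj {V : Type*} [Fintype V] {H : Type*} [NormedAddCommGroup H]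
    [InnerProductSpace ℝ H] (x : V → H) : ℝ :=
  ∑ u : V, ∑ v : V, ‖x u - x v‖ ^ 2

theorem stmt6 (p : ℝ) (hp0 : 0 < p) (hp1 : p ≤ 1)
    {V : Type*} [Fintype V] [DecidableEq V] (G : SimpleGraph V)
    {H : Type*} [NormedAddCommGroup H] [InnerProductSpace ℝ H]
    (n k : ℕ) (hn : Fintype.card V = n) (S : Finset V) (hk : S.card = k)
    (hind : ∀ u ∈ S, ∀ v ∈ S, ¬ G.Adj u v)
    (x : V → H) (hfeas : Feasible G x)
    (hopt : ∀ y : V → WithLp 2 (H × ℝ), Feasible G y → obj x ≤ obj y)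
    (E'' : Finset (V × V))
    (hE1 : ∀ p ∈ E'', p.1 ∈ S ∧ p.2 ∉ S)
    (hE2 : ∀ p ∈ E'', G.Adj p.1 p.2)
    (B₁ B₂ : ℝ) (hB₁ : 0 ≤ B₁) (hB₂ : 0 ≤ B₂)
    (h₁ : |2 * p * ((k : ℝ) * ((n : ℝ) - k)) - 2 * (E''.card : ℝ)| ≤ B₁)
    (h₂ : |(∑ q ∈ E'', ‖x q.1 - x q.2‖ ^ 2) -
        p * ∑ u ∈ S, ∑ v ∈ Sᶜ, ‖x u - x v‖ ^ 2| ≤ B₂) :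
    ∑ u ∈ S, ∑ v ∈ S, ‖x u - x v‖ ^ 2 ≤ 2 * (B₁ + B₂) / p := by
  
  obtain ⟨hnorm, hpos, horth⟩ := hfeas
  have hedge : ∀ u v : V, G.Adj u v → ‖x u - x v‖ ^ 2 = 2 := by
    intro u v h
    rw [norm_sub_sq_real, hnorm, hnorm, horth u v h]; ring
  have hsumE : (∑ q ∈ E'', ‖x q.1 - x q.2‖ ^ 2) = 2 * (E''.card : ℝ) := by
    rw [Finset.sum_congr rfl (fun q hq => hedge _ _ (hE2 q hq))]
    simp [mul_comm]
  set C := ∑ u ∈ S, ∑ v ∈ Sᶜ, ‖x u - x v‖ ^ 2 with hC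
  have hkn : k ≤ n := by rw [← hk, ← hn]; exact Finset.card_le_univ S
  have hScard : (S.card : ℝ) = (k : ℝ) := by rw [hk]
  have hSc : (Sᶜ.card : ℝ) = (n : ℝ) - k := by
    rw [Finset.card_compl, hk, hn, Nat.cast_sub hkn]
  have hCd : 2 * p * ((k : ℝ) * ((n : ℝ) - k)) - (B₁ + B₂) ≤ p * C := by
    rw [hsumE] at h₂
    have h1 := abs_le.mp h₁
    have h2 := abs_le.mp h₂
    linarith [h1.1, h1.2, h2.1, h2.2]
  -- the competing solution
  set y : V → WithLp 2 (H × ℝ) := fun v =>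
    if v ∈ S then (WithLp.equiv 2 (H × ℝ)).symm (0, 1)
    else (WithLp.equiv 2 (H × ℝ)).symm (x v, 0) with hy
  have hin : ∀ u v, (inner ℝ (y u) (y v) : ℝ) =
      if u ∈ S then (if v ∈ S then 1 else 0)
      else (if v ∈ S then 0 else inner ℝ (x u) (x v)) := by
    intro u v
    by_cases hu : u ∈ S <;> by_cases hv : v ∈ S <;>
      simp [hy, hu, hv, WithLp.prod_inner_apply, WithLp.equiv_symm_apply,
        WithLp.toLp_fst, WithLp.toLp_snd, RCLike.inner_apply]
  have hynorm : ∀ v, ‖y v‖ = 1 := by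
    intro v
    have h2 : ‖y v‖ ^ 2 = 1 := by
      by_cases hv : v ∈ S <;>
        simp [hy, hv, WithLp.prod_norm_sq_eq_of_L2, WithLp.equiv_symm_apply,
          WithLp.toLp_fst, WithLp.toLp_snd, hnorm]
    calc ‖y v‖ = Real.sqrt (‖y v‖ ^ 2) := (Real.sqrt_sq (norm_nonneg _)).symm
    _ = 1 := by rw [h2, Real.sqrt_one]
  have hyfeas : Feasible G y := by
    refine ⟨hynorm, ?_, ?_⟩
    · intro u v
      rw [hin]
      split_ifs
      · norm_num
      · norm_num
      · norm_num
      · exact hpos u v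
    · intro u v h
      rw [hin]
      split_ifs with hu hv hv
      · exact absurd h (hind u hu v hv)
      · rfl
      · rfl
      · exact horth u v h
  have hdist : ∀ u v, ‖y u - y v‖ ^ 2 = 2 - 2 * inner ℝ (y u) (y v) := by
    intro u v
    rw [norm_sub_sq_real, hynorm, hynorm]; ring
  have hxdist : ∀ u v, ‖x u - x v‖ ^ 2 = 2 - 2 * inner ℝ (x u) (x v) := by
    intro u v
    rw [norm_sub_sq_real, hnorm, hnorm]; ring
  have split2 : ∀ f : V → V → ℝ, ∑ u : V, ∑ v : V, f u v =
      ((∑ u ∈ S, ∑ v ∈ S, f u v) + ∑ u ∈ S, ∑ v ∈ Sᶜ, f u v) +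
      ((∑ u ∈ Sᶜ, ∑ v ∈ S, f u v) + ∑ u ∈ Sᶜ, ∑ v ∈ Sᶜ, f u v) := by
    intro f
    have h1 : ∀ u, ∑ v : V, f u v = ∑ v ∈ S, f u v + ∑ v ∈ Sᶜ, f u v :=
      fun u => (Finset.sum_add_sum_compl S _).symm
    rw [← Finset.sum_add_sum_compl S (fun u => ∑ v : V, f u v)]
    simp_rw [h1, Finset.sum_add_distrib]
  set A := ∑ u ∈ S, ∑ v ∈ S, ‖x u - x v‖ ^ 2 with hA
  set D := ∑ u ∈ Sᶜ, ∑ v ∈ Sᶜ, ‖x u - x v‖ ^ 2 with hD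
  have hC' : ∑ u ∈ Sᶜ, ∑ v ∈ S, ‖x u - x v‖ ^ 2 = C := by
    rw [hC, Finset.sum_comm]
    exact Finset.sum_congr rfl fun u _ => Finset.sum_congr rfl fun v _ => by
      rw [norm_sub_rev]
  have hobjx : obj x = (A + C) + (C + D) := by
    rw [obj, split2 (fun u v => ‖x u - x v‖ ^ 2), hC']
  have hSS : ∑ u ∈ S, ∑ v ∈ S, ‖y u - y v‖ ^ 2 = 0 := by
    refine Finset.sum_eq_zero fun u hu => Finset.sum_eq_zero fun v hv => ?_
    rw [hdist, hin]
    simp [hu, hv]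
  have hcr1 : ∑ u ∈ S, ∑ v ∈ Sᶜ, ‖y u - y v‖ ^ 2 = 2 * ((k : ℝ) * ((n : ℝ) - k)) := by
    have h2 : ∀ u ∈ S, ∀ v ∈ Sᶜ, ‖y u - y v‖ ^ 2 = 2 := by
      intro u hu v hv
      rw [hdist, hin]
      simp [hu, Finset.mem_compl.mp hv]
    rw [Finset.sum_congr rfl fun u hu => Finset.sum_congr rfl fun v hv => h2 u hu v hv]
    simp only [Finset.sum_const, nsmul_eq_mul]
    rw [hScard, hSc]; ring
  have hcr2 : ∑ u ∈ Sᶜ, ∑ v ∈ S, ‖y u - y v‖ ^ 2 = 2 * ((k : ℝ) * ((n : ℝ) - k)) := by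
    have h2 : ∀ u ∈ Sᶜ, ∀ v ∈ S, ‖y u - y v‖ ^ 2 = 2 := by
      intro u hu v hv
      rw [hdist, hin]
      simp [hv, Finset.mem_compl.mp hu]
    rw [Finset.sum_congr rfl fun u hu => Finset.sum_congr rfl fun v hv => h2 u hu v hv]
    simp only [Finset.sum_const, nsmul_eq_mul]
    rw [hScard, hSc]; ring
  have hDD : ∑ u ∈ Sᶜ, ∑ v ∈ Sᶜ, ‖y u - y v‖ ^ 2 = D := by
    refine Finset.sum_congr rfl fun u hu => Finset.sum_congr rfl fun v hv => ?_
    rw [hdist, hin, hxdist]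
    simp [Finset.mem_compl.mp hu, Finset.mem_compl.mp hv]
  have hobjy : obj y = (0 + 2 * ((k : ℝ) * ((n : ℝ) - k))) +
      (2 * ((k : ℝ) * ((n : ℝ) - k)) + D) := by
    rw [obj, split2 (fun u v => ‖y u - y v‖ ^ 2), hSS, hcr1, hcr2, hDD]
  have hle := hopt y hyfeas
  rw [hobjx, hobjy] at hle
  have hAle : A ≤ 4 * ((k : ℝ) * ((n : ℝ) - k)) - 2 * C := by linarith
  rw [le_div_iff₀ hp0]
  nlinarith [mul_le_mul_of_nonneg_left hAle hp0.le, hCd]
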